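/- Given a natural number N and real numbers b₀, b₁, …, b_N, define the real polynomial L(θ) = Σ_{j=0}^{N} b_j·(2(j+1)θ + 2j+1)·θ^j. Then either L is the zero polynomial, or there exist θ₁, θ₂ ∈ ℝ such that L(θ₁) < 0 < L(θ₂). In particular, if L(θ) ≥ 0 for all θ ∈ ℝ, then all coefficients b₀, …, b_N are zero. -/

import Mathlib

open Finset

section BrunaAux
open Real intervalIntegral Polynomial


lemma bruna_wallis (j : ℕ) :
    ∫ x in (0:ℝ)..π, (2*((j:ℝ)+1)*(-(Real.sin x)^2) + (2*(j:ℝ)+1)) * (-(Real.sin x)^2)^j = 0 := by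
  have hc1 : Continuous fun x : ℝ => Real.sin x ^ (2*j) := by fun_prop
  have hc2 : Continuous fun x : ℝ => Real.sin x ^ (2*j+2) := by fun_prop
  have hi1 : IntervalIntegrable (fun x => Real.sin x ^ (2*j)) MeasureTheory.volume 0 π :=
    hc1.intervalIntegrable 0 π
  have hi2 : IntervalIntegrable (fun x => Real.sin x ^ (2*j+2)) MeasureTheory.volume 0 π :=
    hc2.intervalIntegrable 0 π
  have key : (2*(j:ℝ)+2) * ∫ x in (0:ℝ)..π, Real.sin x ^ (2*j+2)
      = (2*(j:ℝ)+1) * ∫ x in (0:ℝ)..π, Real.sin x ^ (2*j) := by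
    rw [integral_sin_pow]
    rw [Real.sin_zero, Real.sin_pi]
    have h2 : (2*(j:ℝ) + 2) ≠ 0 := by positivity
    rw [zero_pow (by omega : 2*j+1 ≠ 0)]
    push_cast
    field_simp
    ring
  have hrw : ∀ x : ℝ, (2*((j:ℝ)+1)*(-(Real.sin x)^2) + (2*(j:ℝ)+1)) * (-(Real.sin x)^2)^j
      = (-1:ℝ)^j * ((2*(j:ℝ)+1) * Real.sin x ^ (2*j) - (2*(j:ℝ)+2) * Real.sin x ^ (2*j+2)) := by
    intro x
    rw [neg_pow, ← pow_mul]
    ring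
  simp only [hrw]
  rw [integral_const_mul, integral_sub ((hi1.const_mul _)) ((hi2.const_mul _)),
    integral_const_mul, integral_const_mul, key, sub_self, mul_zero]


open Polynomial in

open Polynomial in
noncomputable def brunaPoly (N : ℕ) (b : ℕ → ℝ) : Polynomial ℝ :=
  ∑ j ∈ Finset.range (N+1), C (b j) * (C (2*((j:ℝ)+1)) * X + C (2*(j:ℝ)+1)) * X ^ j

lemma brunaPoly_eval (N : ℕ) (b : ℕ → ℝ) (θ : ℝ) :
    (brunaPoly N b).eval θ
      = ∑ j ∈ Finset.range (N+1), b j * (2*((j:ℝ)+1)*θ + (2*(j:ℝ)+1)) * θ^j := by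
  simp only [brunaPoly, Polynomial.eval_finset_sum, Polynomial.eval_mul,
    Polynomial.eval_add, Polynomial.eval_C, Polynomial.eval_X, Polynomial.eval_pow]

lemma bruna_poly_eq_zero (N : ℕ) (b : ℕ → ℝ)
    (h : ∀ θ : ℝ, 0 ≤ ∑ j ∈ Finset.range (N + 1),
      b j * (2 * ((j : ℝ) + 1) * θ + (2 * (j : ℝ) + 1)) * θ ^ j) :
    brunaPoly N b = 0 := by
  set P := brunaPoly N b with hPdef
  set f : ℝ → ℝ := fun x => P.eval (-(Real.sin x)^2) with hfdef
  have hf0 : ∀ x, 0 ≤ f x := by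
    intro x
    rw [hfdef]
    simp only [brunaPoly_eval, hPdef]
    exact h _
  have hfc : Continuous f := by
    have : Continuous fun x : ℝ => -(Real.sin x)^2 := by fun_prop
    exact P.continuous.comp this
  have hint : (∫ x in (0:ℝ)..π, f x) = 0 := by
    have hev : ∀ x : ℝ, f x = ∑ j ∈ Finset.range (N + 1),
        b j * ((2 * ((j : ℝ) + 1) * (-(Real.sin x)^2) + (2 * (j : ℝ) + 1)) * (-(Real.sin x)^2) ^ j) := by
      intro x
      rw [hfdef]
      simp only [brunaPoly_eval, hPdef, mul_assoc]
    simp only [hev]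
    rw [intervalIntegral.integral_finset_sum]
    · refine Finset.sum_eq_zero fun j _ => ?_
      rw [intervalIntegral.integral_const_mul, bruna_wallis, mul_zero]
    · intro j _
      apply Continuous.intervalIntegrable
      fun_prop
  have hzero : ∀ x ∈ Set.Ioo (0:ℝ) π, f x = 0 := by
    intro x₀ hx₀
    by_contra hne
    have hpos : 0 < f x₀ := lt_of_le_of_ne (hf0 x₀) (Ne.symm hne)
    have : (0:ℝ) < ∫ x in (0:ℝ)..π, f x := by
      rw [intervalIntegral.integral_pos_iff_support_of_nonneg_ae
        (Filter.Eventually.of_forall hf0) (hfc.intervalIntegrable 0 π)]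
      refine ⟨Real.pi_pos, ?_⟩
      have hU : IsOpen ({x : ℝ | f x ≠ 0} ∩ Set.Ioo 0 π) :=
        (isOpen_ne.preimage hfc).inter isOpen_Ioo
      have hsub : ({x : ℝ | f x ≠ 0} ∩ Set.Ioo 0 π) ⊆ Function.support f ∩ Set.Ioc 0 π :=
        fun x hx => ⟨hx.1, hx.2.1, hx.2.2.le⟩
      calc (0:ENNReal) < MeasureTheory.volume ({x : ℝ | f x ≠ 0} ∩ Set.Ioo 0 π) :=
            hU.measure_pos _ ⟨x₀, hne, hx₀⟩
        _ ≤ _ := MeasureTheory.measure_mono hsub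
    rw [hint] at this
    exact lt_irrefl 0 this
  have hroots : Set.Ioo (-1:ℝ) 0 ⊆ {t : ℝ | P.IsRoot t} := by
    intro t ht
    have ht1 : (0:ℝ) < -t := by linarith [ht.2]
    have ht2 : -t ≤ 1 := by linarith [ht.1]
    set x := Real.arcsin (Real.sqrt (-t)) with hx
    have hs01 : Real.sqrt (-t) ≤ 1 := Real.sqrt_le_one.2 ht2
    have hsin : Real.sin x = Real.sqrt (-t) :=
      Real.sin_arcsin (le_trans (by norm_num) (Real.sqrt_nonneg _)) hs01
    have hxpos : 0 < x := Real.arcsin_pos.2 (Real.sqrt_pos.2 ht1)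
    have hxlt : x < π := lt_of_le_of_lt (Real.arcsin_le_pi_div_two _)
      (by linarith [Real.pi_pos])
    have : f x = 0 := hzero x ⟨hxpos, hxlt⟩
    rw [hfdef] at this
    simp only at this
    rwa [hsin, Real.sq_sqrt ht1.le, neg_neg] at this
  have hinf : Set.Infinite {t : ℝ | P.IsRoot t} :=
    (Set.Ioo_infinite (by norm_num : (-1:ℝ) < 0)).mono hroots
  exact Polynomial.eq_zero_of_infinite_isRoot P hinf

lemma brunaPoly_coeff (N : ℕ) (b : ℕ → ℝ) (k : ℕ) :
    (brunaPoly N b).coeff k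
      = (∑ i ∈ Finset.range (N+1), if k = i+1 then b i * (2*(i:ℝ)+2) else 0)
      + (∑ i ∈ Finset.range (N+1), if k = i then b i * (2*(i:ℝ)+1) else 0) := by
  unfold brunaPoly
  rw [Polynomial.finset_sum_coeff, ← Finset.sum_add_distrib]
  refine Finset.sum_congr rfl fun i _ => ?_
  have hrw : (C (b i) * (C (2*((i:ℝ)+1)) * X + C (2*(i:ℝ)+1)) * X ^ i : ℝ[X])
      = C (b i * (2*(i:ℝ)+2)) * X^(i+1) + C (b i * (2*(i:ℝ)+1)) * X^i := by
    have harg : (2*((i:ℝ)+1)) = (2*(i:ℝ)+2) := by ring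
    rw [harg, C_mul, C_mul]
    ring
  rw [hrw, Polynomial.coeff_add, Polynomial.coeff_C_mul, Polynomial.coeff_C_mul,
    Polynomial.coeff_X_pow, Polynomial.coeff_X_pow, mul_ite, mul_one, mul_zero,
    mul_ite, mul_one, mul_zero]

lemma bruna_b_zero (N : ℕ) (b : ℕ → ℝ) (hP : brunaPoly N b = 0) :
    ∀ j ≤ N, b j = 0 := by
  intro j
  induction j using Nat.strong_induction_on with
  | _ j IH =>
    intro hj
    have h0 : (brunaPoly N b).coeff j = 0 := by rw [hP]; simp
    rw [brunaPoly_coeff] at h0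
    have hmem : j ∈ Finset.range (N+1) := Finset.mem_range.2 (Nat.lt_succ_of_le hj)
    rw [Finset.sum_ite_eq (Finset.range (N+1)) j (fun i => b i * (2*(i:ℝ)+1)),
      if_pos hmem] at h0
    match j, hj with
    | 0, _ =>
      have hz : (∑ i ∈ Finset.range (N+1), if 0 = i+1 then b i * (2*(i:ℝ)+2) else 0) = 0 :=
        Finset.sum_eq_zero fun i _ => if_neg (by omega)
      rw [hz, zero_add] at h0
      push_cast at h0
      linarith
    | (m+1), hj =>
      have hm : b m = 0 := IH m (Nat.lt_succ_self m) (by omega)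
      have : (∑ i ∈ Finset.range (N+1), if m+1 = i+1 then b i * (2*(i:ℝ)+2) else 0) = 0 := by
        refine Finset.sum_eq_zero fun i _ => ?_
        by_cases hi : i = m
        · subst hi; simp [hm]
        · rw [if_neg (by omega)]
      rw [this, zero_add] at h0
      have hpos : (2*((m+1:ℕ):ℝ)+1) ≠ 0 := by positivity
      exact (mul_eq_zero.1 h0).resolve_right hpos


lemma bruna_sum_zero (N : ℕ) (b : ℕ → ℝ)
    (h : ∀ θ : ℝ, 0 ≤ ∑ j ∈ Finset.range (N + 1),
      b j * (2 * ((j : ℝ) + 1) * θ + (2 * (j : ℝ) + 1)) * θ ^ j) :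
    ∀ θ : ℝ, ∑ j ∈ Finset.range (N + 1),
      b j * (2 * ((j : ℝ) + 1) * θ + (2 * (j : ℝ) + 1)) * θ ^ j = 0 := by
  intro θ
  rw [← brunaPoly_eval, bruna_poly_eq_zero N b h, Polynomial.eval_zero]

end BrunaAux

/-- For `L(θ) = Σ_{j=0}^{N} b_j (2(j+1)θ + 2j+1) θ^j`:
either `L` is identically zero, or `L` takes both a negative and a positive
value.  In particular, if `L ≥ 0` everywhere then all `b_j` vanish. -/
theorem bruna_lemma
    (N : ℕ) (b : ℕ → ℝ) (L : ℝ → ℝ)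
    (hL : L = fun θ : ℝ => ∑ j ∈ Finset.range (N + 1),
      b j * (2 * ((j : ℝ) + 1) * θ + (2 * (j : ℝ) + 1)) * θ ^ j) :
    ((∀ θ : ℝ, L θ = 0) ∨ ∃ θ₁ θ₂ : ℝ, L θ₁ < 0 ∧ 0 < L θ₂) ∧
    ((∀ θ : ℝ, 0 ≤ L θ) → ∀ j ≤ N, b j = 0) := by
  subst hL
  constructor
  · by_cases hz : ∀ θ : ℝ, (∑ j ∈ Finset.range (N + 1),
        b j * (2 * ((j : ℝ) + 1) * θ + (2 * (j : ℝ) + 1)) * θ ^ j) = 0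
    · exact Or.inl hz
    · right
      push_neg at hz
      obtain ⟨θ₀, hθ₀⟩ := hz
      have hneg : ∃ θ₁ : ℝ, (∑ j ∈ Finset.range (N + 1),
          b j * (2 * ((j : ℝ) + 1) * θ₁ + (2 * (j : ℝ) + 1)) * θ₁ ^ j) < 0 := by
        by_contra hc
        push_neg at hc
        exact hθ₀ (bruna_sum_zero N b hc θ₀)
      have hpos : ∃ θ₂ : ℝ, 0 < ∑ j ∈ Finset.range (N + 1),
          b j * (2 * ((j : ℝ) + 1) * θ₂ + (2 * (j : ℝ) + 1)) * θ₂ ^ j := by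
        by_contra hc
        push_neg at hc
        have h' : ∀ θ : ℝ, 0 ≤ ∑ j ∈ Finset.range (N + 1),
            (fun i => -(b i)) j * (2 * ((j : ℝ) + 1) * θ + (2 * (j : ℝ) + 1)) * θ ^ j := by
          intro θ
          have := hc θ
          have hrw : ∑ j ∈ Finset.range (N + 1),
              (fun i => -(b i)) j * (2 * ((j : ℝ) + 1) * θ + (2 * (j : ℝ) + 1)) * θ ^ j
              = -∑ j ∈ Finset.range (N + 1),
              b j * (2 * ((j : ℝ) + 1) * θ + (2 * (j : ℝ) + 1)) * θ ^ j := by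
            rw [← Finset.sum_neg_distrib]
            exact Finset.sum_congr rfl fun j _ => by ring
          rw [hrw]
          linarith
        have := bruna_sum_zero N (fun i => -(b i)) h' θ₀
        apply hθ₀
        have hrw : ∑ j ∈ Finset.range (N + 1),
            (fun i => -(b i)) j * (2 * ((j : ℝ) + 1) * θ₀ + (2 * (j : ℝ) + 1)) * θ₀ ^ j
            = -∑ j ∈ Finset.range (N + 1),
            b j * (2 * ((j : ℝ) + 1) * θ₀ + (2 * (j : ℝ) + 1)) * θ₀ ^ j := by
          rw [← Finset.sum_neg_distrib]
          exact Finset.sum_congr rfl fun j _ => by ring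
        rw [hrw] at this
        linarith
      obtain ⟨θ₁, h₁⟩ := hneg
      obtain ⟨θ₂, h₂⟩ := hpos
      exact ⟨θ₁, θ₂, h₁, h₂⟩
  · intro h
    exact bruna_b_zero N b (bruna_poly_eq_zero N b h)
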